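/- Let (Z_k)_{k≥0} be a Galton–Watson process with offspring distribution supported on the positive integers (so P(offspring = 0) = 0), offspring mean μ ∈ (1,∞), Z_0 = 1. If (Z_k^{(j)})_{k≥0}, j ∈ ℕ, are i.i.d. copies and P(inf_{k≥1} μ^{−k} Z_k = 0) = 0, then for g_k ∘ ⋯ ∘ g_1(t) = ∑_{j=1}^{⌊t⌋} μ^{−k} Z_k^{(j)} we have inf_{k≥1} g_k ∘ ⋯ ∘ g_1(t) → ∞ almost surely as t → ∞. -/

import Mathlib

open MeasureTheory ProbabilityTheory Filter

/-- Let `(Z j k)` (`j`-th independent copy, generation `k`) be i.i.d. copies of a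
Galton–Watson process with positive offspring, one ancestor (`Z j 0 = 1`), offspring mean
`μ ∈ (1,∞)`, and suppose `ℙ(inf_{k ≥ 1} μ^{-k} Z k = 0) = 0`.  Then, with
`g_k ∘ ⋯ ∘ g_1 (t) = ∑_{j=1}^{⌊t⌋} μ^{-k} Z_k^{(j)}`, almost surely
`inf_{k ≥ 1} g_k ∘ ⋯ ∘ g_1 (t) → ∞` as `t → ∞`. -/
theorem stmt4 {Ω : Type*} [MeasureSpace Ω] [IsProbabilityMeasure (ℙ : Measure Ω)]
    (μ : ℝ) (hμ : 1 < μ)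
    (Z : ℕ → ℕ → Ω → ℕ)
    (hmeas : ∀ j k, Measurable (Z j k))
    (h0 : ∀ j ω, Z j 0 ω = 1)
    (hpos : ∀ j k ω, 1 ≤ Z j k ω)
    (hmean : μ = ∫ ω, (Z 0 1 ω : ℝ))
    (hindep : iIndepFun (fun j => fun ω => fun k => Z j k ω) ℙ)
    (hident : ∀ j, IdentDistrib (fun ω => fun k => Z j k ω) (fun ω => fun k => Z 0 k ω) ℙ ℙ)
    (hinf : ℙ {ω | (⨅ k : ℕ, (Z 0 (k + 1) ω : ℝ) / μ ^ (k + 1)) = 0} = 0) :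
    ∀ᵐ ω ∂ℙ, Tendsto
      (fun t : ℝ => ⨅ k : ℕ, ∑ j ∈ Finset.range ⌊t⌋₊, (Z j (k + 1) ω : ℝ) / μ ^ (k + 1))
      atTop atTop := by
  have hμ0 : (0:ℝ) < μ := lt_trans one_pos hμ
  set Y : ℕ → Ω → ℝ := fun j ω => ⨅ k : ℕ, (Z j (k + 1) ω : ℝ) / μ ^ (k + 1) with hYdef
  have hterm : ∀ j k (ω : Ω), 0 ≤ (Z j (k + 1) ω : ℝ) / μ ^ (k + 1) := fun j k ω =>
    div_nonneg (Nat.cast_nonneg _) (pow_nonneg hμ0.le _)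
  have hYnonneg : ∀ j ω, 0 ≤ Y j ω := fun j ω => Real.iInf_nonneg (fun k => hterm j k ω)
  have hbdd : ∀ j (ω : Ω), BddBelow (Set.range fun k : ℕ => (Z j (k + 1) ω : ℝ) / μ ^ (k + 1)) :=
    fun j ω => ⟨0, by rintro x ⟨k, rfl⟩; exact hterm j k ω⟩
  -- the map on sequence space
  set f : (ℕ → ℕ) → ℝ := fun g => ⨅ k : ℕ, (g (k + 1) : ℝ) / μ ^ (k + 1) with hfdef
  have hfmeas : Measurable f := by
    refine Measurable.iInf (fun k => ?_)
    exact (measurable_from_top.comp (measurable_pi_apply (k + 1))).div_const _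
  have hYf : ∀ j, Y j = f ∘ (fun ω => fun k => Z j k ω) := fun j => rfl
  have hFmeas : ∀ j, Measurable (fun ω => fun k => Z j k ω) := fun j =>
    measurable_pi_lambda _ (fun k => hmeas j k)
  -- find c > 0 with positive probability that Y 0 > c
  obtain ⟨c, hc, hp⟩ : ∃ c : ℝ, 0 < c ∧ ℙ {ω | c < Y 0 ω} ≠ 0 := by
    by_contra hcon
    push_neg at hcon
    have h1 : (ℙ : Measure Ω) Set.univ ≤ ℙ {ω | 0 < Y 0 ω} + ℙ {ω | Y 0 ω = 0} := by
      refine le_trans (measure_mono ?_) (measure_union_le _ _)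
      intro ω _
      rcases lt_or_eq_of_le (hYnonneg 0 ω) with h | h
      · exact Or.inl h
      · exact Or.inr h.symm
    have h2 : ℙ {ω | 0 < Y 0 ω} = 0 := by
      have hsub : {ω : Ω | 0 < Y 0 ω} ⊆ ⋃ n : ℕ, {ω : Ω | 1 / (n + 1 : ℝ) < Y 0 ω} := by
        intro ω hω
        obtain ⟨n, hn⟩ := exists_nat_one_div_lt (show (0:ℝ) < Y 0 ω from hω)
        exact Set.mem_iUnion.2 ⟨n, hn⟩
      exact measure_mono_null hsub (measure_iUnion_null fun n => hcon _ (by positivity))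
    rw [measure_univ, h2, zero_add, hinf] at h1
    exact absurd h1 (by simp)
  -- the events
  set B : Set (ℕ → ℕ) := f ⁻¹' Set.Ioi c with hBdef
  have hBmeas : MeasurableSet B := hfmeas measurableSet_Ioi
  set A : ℕ → Set Ω := fun j => (fun ω => fun k => Z j k ω) ⁻¹' B with hAdef
  have hAmem : ∀ j ω, ω ∈ A j ↔ c < Y j ω := fun j ω => Iff.rfl
  have hAmeas : ∀ j, MeasurableSet (A j) := fun j => (hFmeas j) hBmeas
  have hAeq : ∀ j, ℙ (A j) = ℙ (A 0) := fun j => (hident j).measure_mem_eq hBmeas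
  have hA0 : ℙ (A 0) ≠ 0 := hp
  -- independence of the events
  have hAindep : iIndepSet A ℙ := by
    rw [iIndepSet_iff_meas_biInter hAmeas]
    intro s
    exact hindep.measure_inter_preimage_eq_mul s (sets := fun _ => B) (fun i _ => hBmeas)
  have htsum : (∑' j, ℙ (A j)) = ⊤ := by
    have : (∑' j, ℙ (A j)) = ∑' _ : ℕ, ℙ (A 0) := tsum_congr hAeq
    rw [this]
    exact ENNReal.tsum_const_eq_top_of_ne_zero hA0
  have hBC : ℙ (limsup A atTop) = 1 := measure_limsup_eq_one hAmeas hAindep htsum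
  have hlimsup_meas : MeasurableSet (limsup A atTop) :=
    MeasurableSet.measurableSet_limsup hAmeas
  have hae : ∀ᵐ ω ∂ℙ, ω ∈ limsup A atTop := by
    rw [ae_iff]
    have : {ω | ¬ ω ∈ limsup A atTop} = (limsup A atTop)ᶜ := rfl
    rw [this, measure_compl hlimsup_meas (measure_ne_top _ _), hBC, measure_univ, tsub_self]
  filter_upwards [hae] with ω hω
  -- on this event, infinitely many j satisfy Y j ω > c
  have hfreq : {j : ℕ | c < Y j ω}.Infinite := by
    rw [← Nat.frequently_atTop_iff_infinite]
    exact mem_limsup_iff_frequently_mem.1 hω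
  -- partial sums of Y diverge
  set S : ℕ → ℝ := fun n => ∑ j ∈ Finset.range n, Y j ω with hSdef
  have hSmono : Monotone S := fun m n hmn =>
    Finset.sum_le_sum_of_subset_of_nonneg (Finset.range_subset_range.2 hmn)
      (fun j _ _ => hYnonneg j ω)
  have hSkey : ∀ m : ℕ, ∃ N, (m : ℝ) * c ≤ S N := by
    intro m
    induction m with
    | zero => exact ⟨0, by simp [hSdef]⟩
    | succ m ih =>
      obtain ⟨N, hN⟩ := ih
      obtain ⟨j, hj, hjN⟩ := hfreq.exists_gt N
      refine ⟨j + 1, ?_⟩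
      have hSj : S (j + 1) = S j + Y j ω := Finset.sum_range_succ _ _
      have : ((m : ℝ) + 1) * c ≤ S j + Y j ω := by
        have h1 : (m : ℝ) * c ≤ S j := hN.trans (hSmono hjN.le)
        have h2 : c ≤ Y j ω := le_of_lt hj
        nlinarith
      rw [hSj]
      push_cast
      linarith
  have hStop : Tendsto S atTop atTop := by
    refine tendsto_atTop_atTop_of_monotone hSmono (fun b => ?_)
    obtain ⟨N, hN⟩ := hSkey ⌈b / c⌉₊
    have hb : b ≤ (⌈b / c⌉₊ : ℝ) * c := by
      rw [← div_le_iff₀ hc]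
      exact Nat.le_ceil _
    exact ⟨N, hb.trans hN⟩
  -- compare with the infimum of sums
  have hkey : ∀ n : ℕ, S n ≤ ⨅ k : ℕ, ∑ j ∈ Finset.range n, (Z j (k + 1) ω : ℝ) / μ ^ (k + 1) := by
    intro n
    refine le_ciInf (fun k => Finset.sum_le_sum (fun j _ => ?_))
    exact ciInf_le (hbdd j ω) k
  exact tendsto_atTop_mono (fun t => hkey ⌊t⌋₊) (hStop.comp tendsto_nat_floor_atTop)
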